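/- arXiv:2512.24694 — 6 statements merged into one kernel-verified Lean document; each statement's English description precedes it below -/
import Mathlib

section
/- Let f_1,…,f_N : ℝ^d → ℝ be convex and L-smooth (L > 0), let f = (1/N)Σ_i f_i, and let x* be a global minimizer of f with f* = f(x*). Let x_1,…,x_N ∈ ℝ^d with x̄ = (1/N)Σ_i x_i, and let g_1,…,g_N be independent square-integrable ℝ^d-valued random vectors with E[g_i] = ∇f_i(x_i) and E‖g_i − ∇f_i(x_i)‖² ≤ σ_i². For a step size η ≥ 0 set x̄⁺ = x̄ − (η/N)Σ_i g_i. Then E‖x̄⁺ − x*‖² ≤ ‖x̄ − x*‖² + (η²/N)·σ̄² + 2η(2Lη − 1)(f(x̄) − f*) + (Lη/N)(2Lη + 1)·Σ_i ‖x̄ − x_i‖², where σ̄² = (1/N)Σ_i σ_i². -/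
open MeasureTheory ProbabilityTheory

section Aux
variable {F : Type*} [NormedAddCommGroup F] [InnerProductSpace ℝ F] [CompleteSpace F]
local notation "⟪" x ", " y "⟫" => @inner ℝ _ _ x y

lemma curve_hasDerivAt' {f : F → ℝ} {G : F → F} (hgrad : ∀ u, HasGradientAt f (G u) u)
    (a b : F) (t : ℝ) :
    HasDerivAt (fun s : ℝ => f (a + s • b)) ⟪G (a + t • b), b⟫ t := by
  have hc : HasDerivAt (fun s : ℝ => a + s • b) b t := by
    simpa using ((hasDerivAt_id t).smul_const b).const_add a
  have hf : HasFDerivAt f (InnerProductSpace.toDual ℝ F (G (a + t • b))) (a + t • b) :=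
    hasGradientAt_iff_hasFDerivAt.mp (hgrad _)
  simpa [InnerProductSpace.toDual_apply_apply, Function.comp_def] using hf.comp_hasDerivAt t hc

lemma smooth_upper {f : F → ℝ} {G : F → F} (hgrad : ∀ u, HasGradientAt f (G u) u)
    {L : ℝ} (hL : 0 < L) (hsmooth : ∀ u v, ‖G u - G v‖ ≤ L * ‖u - v‖) (u v : F) :
    f v ≤ f u + ⟪G u, v - u⟫ + L / 2 * ‖v - u‖ ^ 2 := by
  set b := v - u with hb
  set ψ : ℝ → ℝ := fun t => f (u + t • b) - t * ⟪G u, b⟫ - L / 2 * t ^ 2 * ‖b‖ ^ 2 with hψ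
  have hder : ∀ t : ℝ, HasDerivAt ψ (⟪G (u + t • b), b⟫ - ⟪G u, b⟫ - L * t * ‖b‖ ^ 2) t := by
    intro t
    have h1 := curve_hasDerivAt' hgrad u b t
    have h2 : HasDerivAt (fun s : ℝ => s * ⟪G u, b⟫) ⟪G u, b⟫ t := by
      simpa using (hasDerivAt_id t).mul_const (⟪G u, b⟫)
    have h3 : HasDerivAt (fun s : ℝ => L / 2 * s ^ 2 * ‖b‖ ^ 2) (L * t * ‖b‖ ^ 2) t := by
      have := ((hasDerivAt_pow 2 t).const_mul (L/2)).mul_const (‖b‖^2)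
      refine this.congr_deriv ?_
      ring
    exact (h1.sub h2).sub h3
  have hmono : AntitoneOn ψ (Set.Icc (0:ℝ) 1) := by
    apply antitoneOn_of_deriv_nonpos (convex_Icc 0 1)
    · exact fun t _ => (hder t).differentiableAt.continuousAt.continuousWithinAt
    · exact fun t _ => (hder t).differentiableAt.differentiableWithinAt
    · intro t ht
      rw [interior_Icc] at ht
      rw [(hder t).deriv]
      have key : ⟪G (u + t • b) - G u, b⟫ ≤ L * t * ‖b‖ ^ 2 := by
        calc ⟪G (u + t • b) - G u, b⟫ ≤ ‖G (u + t • b) - G u‖ * ‖b‖ := real_inner_le_norm _ _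
          _ ≤ (L * ‖(u + t • b) - u‖) * ‖b‖ := by
              gcongr
              exact hsmooth _ _
          _ = L * (|t| * ‖b‖) * ‖b‖ := by simp [norm_smul]
          _ = L * t * ‖b‖ ^ 2 := by rw [abs_of_pos ht.1]; ring
      rw [inner_sub_left] at key
      linarith
  have h01 := hmono (Set.left_mem_Icc.2 zero_le_one) (Set.right_mem_Icc.2 zero_le_one) zero_le_one
  simp only [hψ, one_smul, one_pow, one_mul, zero_smul, add_zero, zero_pow, zero_mul,
    mul_zero, sub_zero] at h01
  have : u + b = v := by rw [hb]; abel
  rw [this] at h01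
  linarith

/-- convex lower bound -/
lemma convex_lower {f : F → ℝ} {G : F → F} (hgrad : ∀ u, HasGradientAt f (G u) u)
    (hconv : ConvexOn ℝ Set.univ f) (u v : F) :
    f u + ⟪G u, v - u⟫ ≤ f v := by
  have hφ : ConvexOn ℝ Set.univ (fun t : ℝ => f (u + t • (v - u))) := by
    have h := hconv.comp_affineMap (AffineMap.lineMap u v : ℝ →ᵃ[ℝ] F)
    have : (fun t : ℝ => f (u + t • (v - u))) = (f ∘ (AffineMap.lineMap u v : ℝ →ᵃ[ℝ] F)) := by
      funext t; simp [AffineMap.lineMap_apply, add_comm]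
    rw [this]
    simpa using h
  have hd := curve_hasDerivAt' hgrad u (v - u) 0
  have h2 := hφ.le_slope_of_hasDerivAt (Set.mem_univ (0:ℝ)) (Set.mem_univ (1:ℝ)) one_pos
    (by simpa using hd)
  rw [slope_def_field] at h2
  simp at h2
  linarith [h2]

set_option maxHeartbeats 1000000 in
lemma det_ineq {N : ℕ} (hN : 1 ≤ N)
    (f : Fin N → F → ℝ) (gradf : Fin N → F → F)
    (hgrad : ∀ i x, HasGradientAt (f i) (gradf i x) x)
    (L : ℝ) (hL : 0 < L)
    (hsmooth : ∀ i x y, ‖gradf i x - gradf i y‖ ≤ L * ‖x - y‖)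
    (hconv : ∀ i, ConvexOn ℝ Set.univ (f i))
    (xstar : F)
    (hstar : ∀ y, (N : ℝ)⁻¹ * ∑ i, f i xstar ≤ (N : ℝ)⁻¹ * ∑ i, f i y)
    (x : Fin N → F) (η : ℝ) (hη : 0 ≤ η) :
    ‖(N : ℝ)⁻¹ • (∑ i, x i) - (η / N) • ∑ i, gradf i (x i) - xstar‖ ^ 2
      ≤ ‖(N : ℝ)⁻¹ • (∑ i, x i) - xstar‖ ^ 2
        + 2 * η * (2 * L * η - 1)
            * ((N : ℝ)⁻¹ * ∑ i, f i ((N : ℝ)⁻¹ • ∑ j, x j) - (N : ℝ)⁻¹ * ∑ i, f i xstar)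
        + (L * η / N) * (2 * L * η + 1) * ∑ i, ‖(N : ℝ)⁻¹ • (∑ j, x j) - x i‖ ^ 2 := by
  have hNpos : (0:ℝ) < N := by exact_mod_cast Nat.lt_of_lt_of_le Nat.zero_lt_one hN
  set xb : F := (N : ℝ)⁻¹ • (∑ i, x i) with hxb
  set v : F := (N : ℝ)⁻¹ • ∑ i, gradf i (x i) with hv
  set w : F := (N : ℝ)⁻¹ • ∑ i, gradf i xb with hw
  set Fxb : ℝ := (N : ℝ)⁻¹ * ∑ i, f i xb with hFxb
  set Fst : ℝ := (N : ℝ)⁻¹ * ∑ i, f i xstar with hFst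
  set S : ℝ := ∑ i, ‖xb - x i‖ ^ 2 with hS
  have hSnn : 0 ≤ S := Finset.sum_nonneg fun i _ => sq_nonneg _
  have hgap : 0 ≤ Fxb - Fst := sub_nonneg.2 (hstar xb)
  -- descent lemma for the average F
  have havg_upper : ∀ y : F, (N : ℝ)⁻¹ * ∑ i, f i y
      ≤ Fxb + ⟪w, y - xb⟫ + L / 2 * ‖y - xb‖ ^ 2 := by
    intro y
    have h1 : ∀ i : Fin N, f i y ≤ f i xb + ⟪gradf i xb, y - xb⟫ + L / 2 * ‖y - xb‖ ^ 2 :=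
      fun i => smooth_upper (hgrad i) hL (hsmooth i) xb y
    have h2 : (∑ i, f i y) ≤ ∑ i, (f i xb + ⟪gradf i xb, y - xb⟫ + L / 2 * ‖y - xb‖ ^ 2) :=
      Finset.sum_le_sum fun i _ => h1 i
    have h3 : ⟪w, y - xb⟫ = (N : ℝ)⁻¹ * ∑ i, ⟪gradf i xb, y - xb⟫ := by
      rw [hw, real_inner_smul_left, sum_inner]
    rw [h3]
    rw [Finset.sum_add_distrib, Finset.sum_add_distrib, Finset.sum_const, Finset.card_univ,
      Fintype.card_fin] at h2
    have := mul_le_mul_of_nonneg_left h2 (inv_nonneg.2 hNpos.le)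
    calc (N : ℝ)⁻¹ * ∑ i, f i y ≤ (N : ℝ)⁻¹ * ((∑ i, f i xb) + (∑ i, ⟪gradf i xb, y - xb⟫)
        + N • (L / 2 * ‖y - xb‖ ^ 2)) := this
      _ = Fxb + (N : ℝ)⁻¹ * ∑ i, ⟪gradf i xb, y - xb⟫ + L / 2 * ‖y - xb‖ ^ 2 := by
          rw [nsmul_eq_mul, hFxb]
          field_simp [hFxb]
  -- cocoercivity at minimizer
  have hco : ‖w‖ ^ 2 ≤ 2 * L * (Fxb - Fst) := by
    have h1 := havg_upper (xb - L⁻¹ • w)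
    have h2 : Fst ≤ (N : ℝ)⁻¹ * ∑ i, f i (xb - L⁻¹ • w) := hstar _
    have h3 : (xb - L⁻¹ • w) - xb = -(L⁻¹ • w) := by abel
    rw [h3] at h1
    have h4 : ⟪w, -(L⁻¹ • w)⟫ = -(L⁻¹ * ‖w‖ ^ 2) := by
      rw [inner_neg_right, real_inner_smul_right, real_inner_self_eq_norm_sq]
    have h5 : ‖-(L⁻¹ • w)‖ ^ 2 = L⁻¹ ^ 2 * ‖w‖ ^ 2 := by
      rw [norm_neg, norm_smul, mul_pow, norm_inv, Real.norm_eq_abs, abs_of_pos hL]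
    rw [h4, h5] at h1
    have hL' : L ≠ 0 := ne_of_gt hL
    have : Fst ≤ Fxb - L⁻¹ * ‖w‖ ^ 2 + L / 2 * (L⁻¹ ^ 2 * ‖w‖ ^ 2) := le_trans h2 h1
    have hkey : L⁻¹ * ‖w‖ ^ 2 - L / 2 * (L⁻¹ ^ 2 * ‖w‖ ^ 2) = ‖w‖ ^ 2 / (2 * L) := by
      field_simp
      ring
    have h6 : ‖w‖ ^ 2 / (2 * L) ≤ Fxb - Fst := by linarith
    calc ‖w‖ ^ 2 = ‖w‖ ^ 2 / (2 * L) * (2 * L) := by field_simp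
      _ ≤ (Fxb - Fst) * (2 * L) := by
          apply mul_le_mul_of_nonneg_right h6
          positivity
      _ = 2 * L * (Fxb - Fst) := by ring
  -- cross term
  have hcross : η * (Fxb - Fst) - η * L / 2 * ((N:ℝ)⁻¹ * S) ≤ ⟪xb - xstar, η • v⟫ := by
    have h1 : ∀ i : Fin N, f i xb - f i xstar - L / 2 * ‖xb - x i‖ ^ 2
        ≤ ⟪gradf i (x i), xb - xstar⟫ := by
      intro i
      have ha : f i xb ≤ f i (x i) + ⟪gradf i (x i), xb - x i⟫ + L / 2 * ‖xb - x i‖ ^ 2 :=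
        smooth_upper (hgrad i) hL (hsmooth i) (x i) xb
      have hb : f i (x i) + ⟪gradf i (x i), xstar - x i⟫ ≤ f i xstar :=
        convex_lower (hgrad i) (hconv i) (x i) xstar
      have hc : ⟪gradf i (x i), xb - x i⟫ - ⟪gradf i (x i), xstar - x i⟫
          = ⟪gradf i (x i), xb - xstar⟫ := by
        rw [← inner_sub_right]
        congr 1
        abel
      linarith [ha, hb, hc.ge, hc.le]
    have h2 : ⟪xb - xstar, η • v⟫ = η * ((N:ℝ)⁻¹ * ∑ i, ⟪gradf i (x i), xb - xstar⟫) := by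
      rw [real_inner_smul_right, hv, real_inner_smul_right, inner_sum]
      congr 2
      exact Finset.sum_congr rfl fun i _ => real_inner_comm _ _
    rw [h2]
    have h3 : (∑ i, (f i xb - f i xstar - L / 2 * ‖xb - x i‖ ^ 2))
        ≤ ∑ i, ⟪gradf i (x i), xb - xstar⟫ := Finset.sum_le_sum fun i _ => h1 i
    have h4 : (N:ℝ)⁻¹ * (∑ i, (f i xb - f i xstar - L / 2 * ‖xb - x i‖ ^ 2))
        ≤ (N:ℝ)⁻¹ * ∑ i, ⟪gradf i (x i), xb - xstar⟫ :=
      mul_le_mul_of_nonneg_left h3 (inv_nonneg.2 hNpos.le)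
    have h5 : (N:ℝ)⁻¹ * (∑ i, (f i xb - f i xstar - L / 2 * ‖xb - x i‖ ^ 2))
        = (Fxb - Fst) - L / 2 * ((N:ℝ)⁻¹ * S) := by
      rw [Finset.sum_sub_distrib, Finset.sum_sub_distrib, ← Finset.mul_sum]
      rw [hFxb, hFst, hS]
      ring
    rw [h5] at h4
    calc η * (Fxb - Fst) - η * L / 2 * ((N:ℝ)⁻¹ * S)
        = η * ((Fxb - Fst) - L / 2 * ((N:ℝ)⁻¹ * S)) := by ring
      _ ≤ η * ((N:ℝ)⁻¹ * ∑ i, ⟪gradf i (x i), xb - xstar⟫) :=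
          mul_le_mul_of_nonneg_left h4 hη
  -- bound on ‖v‖²
  have hvbound : ‖v‖ ^ 2 ≤ 2 * L ^ 2 * ((N:ℝ)⁻¹ * S) + 4 * L * (Fxb - Fst) := by
    have h1 : ‖v - w‖ ^ 2 ≤ L ^ 2 * ((N:ℝ)⁻¹ * S) := by
      have ha : v - w = (N:ℝ)⁻¹ • ∑ i, (gradf i (x i) - gradf i xb) := by
        rw [hv, hw, ← smul_sub, Finset.sum_sub_distrib]
      have hb : ‖v - w‖ ≤ (N:ℝ)⁻¹ * ∑ i, ‖gradf i (x i) - gradf i xb‖ := by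
        rw [ha, norm_smul, norm_inv, Real.norm_natCast]
        exact mul_le_mul_of_nonneg_left (norm_sum_le _ _) (inv_nonneg.2 hNpos.le)
      have hc : ‖v - w‖ ^ 2 ≤ ((N:ℝ)⁻¹ * ∑ i, ‖gradf i (x i) - gradf i xb‖) ^ 2 := by
        exact pow_le_pow_left₀ (norm_nonneg _) hb 2
      have hd : ((∑ i, ‖gradf i (x i) - gradf i xb‖) ^ 2)
          ≤ (N:ℝ) * ∑ i, ‖gradf i (x i) - gradf i xb‖ ^ 2 := by
        have := sq_sum_le_card_mul_sum_sq (s := (Finset.univ : Finset (Fin N)))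
          (f := fun i => ‖gradf i (x i) - gradf i xb‖)
        simpa using this
      have he : (∑ i, ‖gradf i (x i) - gradf i xb‖ ^ 2) ≤ L ^ 2 * S := by
        rw [hS, Finset.mul_sum]
        apply Finset.sum_le_sum
        intro i _
        have := hsmooth i (x i) xb
        calc ‖gradf i (x i) - gradf i xb‖ ^ 2 ≤ (L * ‖x i - xb‖) ^ 2 := by
              exact pow_le_pow_left₀ (norm_nonneg _) this 2
          _ = L ^ 2 * ‖xb - x i‖ ^ 2 := by rw [norm_sub_rev]; ring
      calc ‖v - w‖ ^ 2 ≤ ((N:ℝ)⁻¹ * ∑ i, ‖gradf i (x i) - gradf i xb‖) ^ 2 := hc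
        _ = (N:ℝ)⁻¹ ^ 2 * (∑ i, ‖gradf i (x i) - gradf i xb‖) ^ 2 := by ring
        _ ≤ (N:ℝ)⁻¹ ^ 2 * ((N:ℝ) * ∑ i, ‖gradf i (x i) - gradf i xb‖ ^ 2) := by
            apply mul_le_mul_of_nonneg_left hd (sq_nonneg _)
        _ ≤ (N:ℝ)⁻¹ ^ 2 * ((N:ℝ) * (L ^ 2 * S)) := by
            apply mul_le_mul_of_nonneg_left _ (sq_nonneg _)
            exact mul_le_mul_of_nonneg_left he hNpos.le
        _ = L ^ 2 * ((N:ℝ)⁻¹ * S) := by field_simp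
    have h2 : ‖v‖ ^ 2 ≤ 2 * ‖v - w‖ ^ 2 + 2 * ‖w‖ ^ 2 := by
      have := norm_add_le (v - w) w
      have h' : v - w + w = v := by abel
      rw [h'] at this
      have hsq : ‖v‖ ^ 2 ≤ (‖v - w‖ + ‖w‖) ^ 2 := pow_le_pow_left₀ (norm_nonneg _) this 2
      nlinarith [hsq, sq_nonneg (‖v - w‖ - ‖w‖)]
    linarith [h1, hco, h2, mul_le_mul_of_nonneg_left h1 (by norm_num : (0:ℝ) ≤ 2),
      mul_le_mul_of_nonneg_left hco (by norm_num : (0:ℝ) ≤ 2)]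
  -- combine
  have hexp : ‖xb - (η / N) • ∑ i, gradf i (x i) - xstar‖ ^ 2
      = ‖xb - xstar‖ ^ 2 - 2 * ⟪xb - xstar, η • v⟫ + ‖η • v‖ ^ 2 := by
    have h1 : (η / N) • (∑ i, gradf i (x i)) = η • v := by
      rw [hv, smul_smul, div_eq_mul_inv]
    have h2 : xb - (η / N) • ∑ i, gradf i (x i) - xstar = (xb - xstar) - η • v := by
      rw [h1]; abel
    rw [h2, norm_sub_sq_real]
  have hnv : ‖η • v‖ ^ 2 = η ^ 2 * ‖v‖ ^ 2 := by
    rw [norm_smul, Real.norm_eq_abs, mul_pow, sq_abs]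
  rw [hexp, hnv]
  have hmsq : η ^ 2 * ‖v‖ ^ 2 ≤ η ^ 2 * (2 * L ^ 2 * ((N:ℝ)⁻¹ * S) + 4 * L * (Fxb - Fst)) :=
    mul_le_mul_of_nonneg_left hvbound (sq_nonneg _)
  have hE : 2 * η * (2 * L * η - 1) * (Fxb - Fst) + (L * η / N) * (2 * L * η + 1) * S
      = η ^ 2 * (2 * L ^ 2 * ((N:ℝ)⁻¹ * S) + 4 * L * (Fxb - Fst))
        - 2 * (η * (Fxb - Fst) - η * L / 2 * ((N:ℝ)⁻¹ * S)) := by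
    field_simp
    ring
  linarith [hcross, hmsq, hE]

end Aux
section Stoch
local notation "⟪" x ", " y "⟫" => @inner ℝ _ _ x y

variable {d N : ℕ} {Ω : Type*} [MeasurableSpace Ω] (μ : Measure Ω) [IsProbabilityMeasure μ]

lemma inner_integrable {f g : Ω → EuclideanSpace ℝ (Fin d)}
    (hf : MemLp f 2 μ) (hg : MemLp g 2 μ) :
    Integrable (fun ω => ⟪f ω, g ω⟫) μ := by
  have h := L2.integrable_inner (𝕜 := ℝ) (hf.toLp f) (hg.toLp g)
  apply h.congr
  filter_upwards [hf.coeFn_toLp, hg.coeFn_toLp] with ω h1 h2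
  rw [h1, h2]

lemma stoch_ineq (hN : 1 ≤ N)
    (g : Fin N → Ω → EuclideanSpace ℝ (Fin d))
    (hgmeas : ∀ i, Measurable (g i))
    (hindep : iIndepFun g μ)
    (hL2 : ∀ i, MemLp (g i) 2 μ)
    (m : Fin N → EuclideanSpace ℝ (Fin d))
    (hmean : ∀ i, ∫ ω, g i ω ∂μ = m i)
    (σ : Fin N → ℝ)
    (hvar : ∀ i, ∫ ω, ‖g i ω - m i‖ ^ 2 ∂μ ≤ (σ i) ^ 2)
    (A : EuclideanSpace ℝ (Fin d)) (c : ℝ) :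
    ∫ ω, ‖A - c • (∑ i, g i ω - ∑ i, m i)‖ ^ 2 ∂μ ≤ ‖A‖ ^ 2 + c ^ 2 * ∑ i, (σ i) ^ 2 := by
  set h : Fin N → Ω → EuclideanSpace ℝ (Fin d) := fun i ω => g i ω - m i with hh
  have hL2h : ∀ i, MemLp (h i) 2 μ := fun i => (hL2 i).sub (memLp_const _)
  have hInth : ∀ i, Integrable (h i) μ := fun i => (hL2h i).integrable one_le_two
  have hmeanh : ∀ i, ∫ ω, h i ω ∂μ = 0 := by
    intro i
    rw [hh]
    rw [integral_sub ((hL2 i).integrable one_le_two) (integrable_const _), hmean i,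
      integral_const]
    simp
  -- cross terms vanish
  have hcross : ∀ i j, i ≠ j → ∫ ω, ⟪h i ω, h j ω⟫ ∂μ = 0 := by
    intro i j hij
    have hIndij : IndepFun (h i) (h j) μ := by
      have h1 : IndepFun (g i) (g j) μ := hindep.indepFun hij
      have hm : ∀ k : Fin N, Measurable (fun v : EuclideanSpace ℝ (Fin d) => v - m k) :=
        fun k => measurable_id.sub measurable_const
      exact h1.comp (hm i) (hm j)
    have hproj : ∀ (l : Fin N) (k : Fin d), Integrable (fun ω => h l ω k) μ := by
      intro l k
      have := (EuclideanSpace.proj k : EuclideanSpace ℝ (Fin d) →L[ℝ] ℝ).integrable_comp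
        (hInth l)
      simpa using this
    have hindk : ∀ k : Fin d, IndepFun (fun ω => h i ω k) (fun ω => h j ω k) μ := by
      intro k
      have hm : Measurable (fun v : EuclideanSpace ℝ (Fin d) => v k) :=
        (EuclideanSpace.proj k : EuclideanSpace ℝ (Fin d) →L[ℝ] ℝ).continuous.measurable
      exact hIndij.comp hm hm
    have hint0 : ∀ (l : Fin N) (k : Fin d), ∫ ω, h l ω k ∂μ = 0 := by
      intro l k
      have := (EuclideanSpace.proj k : EuclideanSpace ℝ (Fin d) →L[ℝ] ℝ).integral_comp_comm
        (hInth l)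
      simpa [hmeanh l] using this
    have hcoord : ∀ (k : Fin d), ∫ ω, (h i ω k) * (h j ω k) ∂μ = 0 := by
      intro k
      have h0 := (hindk k).integral_fun_mul_eq_mul_integral (hproj i k).1 (hproj j k).1
      rw [hint0 i k, hint0 j k, mul_zero] at h0
      exact h0
    have hfun : (fun ω => ⟪h i ω, h j ω⟫) = fun ω => ∑ k, h i ω k * h j ω k := by
      funext ω
      simp [PiLp.inner_apply, RCLike.inner_apply, conj_trivial, mul_comm]
    calc ∫ ω, ⟪h i ω, h j ω⟫ ∂μ = ∫ ω, ∑ k, (h i ω k) * (h j ω k) ∂μ := by rw [hfun]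
      _ = ∑ k, ∫ ω, (h i ω k) * (h j ω k) ∂μ :=
          integral_finset_sum _ fun k _ => (hindk k).integrable_mul (hproj i k) (hproj j k)
      _ = 0 := by simp [hcoord]
  -- main decomposition
  set B : Ω → EuclideanSpace ℝ (Fin d) := fun ω => c • (∑ i, h i ω) with hB
  have hBeq : ∀ ω : Ω, A - c • (∑ i, g i ω - ∑ i, m i) = A - B ω := by
    intro ω
    rw [hB]
    congr 2
    rw [← Finset.sum_sub_distrib]
  have hL2S : MemLp (fun ω => ∑ i, h i ω) 2 μ :=
    memLp_finset_sum Finset.univ fun i _ => hL2h i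
  have hL2B : MemLp B 2 μ := hL2S.const_smul c
  have hIntB : Integrable B μ := hL2B.integrable one_le_two
  have hintB0 : ∫ ω, B ω ∂μ = 0 := by
    rw [hB, integral_smul, integral_finset_sum _ fun i _ => hInth i]
    simp [hmeanh]
  have hIntBB : Integrable (fun ω => ⟪B ω, B ω⟫) μ := inner_integrable μ hL2B hL2B
  have hIntAB : Integrable (fun ω => ⟪A, B ω⟫) μ := hIntB.const_inner A
  have hfun : (fun ω => ‖A - B ω‖ ^ 2)
      = fun ω => ‖A‖ ^ 2 - 2 * ⟪A, B ω⟫ + ⟪B ω, B ω⟫ := by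
    funext ω
    rw [norm_sub_sq_real, real_inner_self_eq_norm_sq]
  have hexp : ∫ ω, ‖A - B ω‖ ^ 2 ∂μ = ‖A‖ ^ 2 + ∫ ω, ⟪B ω, B ω⟫ ∂μ := by
    have hI2 : Integrable (fun ω => 2 * ⟪A, B ω⟫) μ := hIntAB.const_mul 2
    have hI1 : Integrable (fun ω => ‖A‖ ^ 2 - 2 * ⟪A, B ω⟫) μ := (integrable_const _).sub hI2
    rw [hfun, integral_add hI1 hIntBB, integral_sub (integrable_const _) hI2, integral_const,
      integral_const_mul, integral_inner hIntB, hintB0]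
    simp
  -- bound the variance term
  have hBB : ∫ ω, ⟪B ω, B ω⟫ ∂μ ≤ c ^ 2 * ∑ i, (σ i) ^ 2 := by
    have h1 : (fun ω => ⟪B ω, B ω⟫)
        = fun ω => c ^ 2 * ∑ i, ∑ j, ⟪h i ω, h j ω⟫ := by
      funext ω
      rw [hB]
      have hSS : ⟪(∑ i, h i ω : EuclideanSpace ℝ (Fin d)), ∑ j, h j ω⟫
          = ∑ i, ∑ j, ⟪h i ω, h j ω⟫ := by
        rw [sum_inner]
        exact Finset.sum_congr rfl fun i _ => inner_sum _ _ _
      rw [real_inner_smul_left, real_inner_smul_right, hSS]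
      ring
    rw [h1]
    rw [integral_const_mul]
    have h2 : ∫ ω, ∑ i, ∑ j, ⟪h i ω, h j ω⟫ ∂μ
        = ∑ i, ∑ j, ∫ ω, ⟪h i ω, h j ω⟫ ∂μ := by
      rw [integral_finset_sum _ fun i _ => integrable_finset_sum _
        fun j _ => inner_integrable μ (hL2h i) (hL2h j)]
      congr 1
      funext i
      exact integral_finset_sum _ fun j _ => inner_integrable μ (hL2h i) (hL2h j)
    rw [h2]
    have h3 : ∀ i : Fin N, (∑ j, ∫ ω, ⟪h i ω, h j ω⟫ ∂μ) ≤ (σ i) ^ 2 := by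
      intro i
      rw [Finset.sum_eq_single i (fun j _ hji => hcross i j (Ne.symm hji))
        (fun hmem => absurd (Finset.mem_univ i) hmem)]
      have : (fun ω => ⟪h i ω, h i ω⟫) = fun ω => ‖h i ω‖ ^ 2 := by
        funext ω
        rw [real_inner_self_eq_norm_sq]
      rw [this]
      exact hvar i
    exact mul_le_mul_of_nonneg_left (Finset.sum_le_sum fun i _ => h3 i) (sq_nonneg c)
  have hcongr : ∫ ω, ‖A - c • (∑ i, g i ω - ∑ i, m i)‖ ^ 2 ∂μ
      = ∫ ω, ‖A - B ω‖ ^ 2 ∂μ := by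
    congr 1
    funext ω
    rw [hBeq ω]
  rw [hcongr, hexp]
  linarith [hBB]
end Stoch


/-- descent lemma: for convex `L`-smooth `f_i` with gradients `∇f_i`,
a global minimizer `x*` of `f = (1/N) Σ f_i`, points `x_i` with average `x̄`, and independent
square-integrable random vectors `g_i` with mean `∇f_i(x_i)` and variance at most `σ_i²`,
the averaged SGD step `x̄⁺ = x̄ − (η/N) Σ g_i` satisfies
`E‖x̄⁺ − x*‖² ≤ ‖x̄ − x*‖² + (η²/N) σ̄² + 2η(2Lη − 1)(f(x̄) − f*)
  + (Lη/N)(2Lη + 1) Σ ‖x̄ − x_i‖²`. -/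
theorem stmt3 {d N : ℕ} (hN : 1 ≤ N)
    (f : Fin N → EuclideanSpace ℝ (Fin d) → ℝ)
    (gradf : Fin N → EuclideanSpace ℝ (Fin d) → EuclideanSpace ℝ (Fin d))
    (hgrad : ∀ i x, HasGradientAt (f i) (gradf i x) x)
    (L : ℝ) (hL : 0 < L)
    (hsmooth : ∀ i x y, ‖gradf i x - gradf i y‖ ≤ L * ‖x - y‖)
    (hconv : ∀ i, ConvexOn ℝ Set.univ (f i))
    (xstar : EuclideanSpace ℝ (Fin d))
    (hstar : ∀ y, (N : ℝ)⁻¹ * ∑ i, f i xstar ≤ (N : ℝ)⁻¹ * ∑ i, f i y)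
    (x : Fin N → EuclideanSpace ℝ (Fin d))
    {Ω : Type*} [MeasurableSpace Ω] (μ : Measure Ω) [IsProbabilityMeasure μ]
    (g : Fin N → Ω → EuclideanSpace ℝ (Fin d))
    (hgmeas : ∀ i, Measurable (g i))
    (hindep : iIndepFun g μ)
    (hL2 : ∀ i, MemLp (g i) 2 μ)
    (hmean : ∀ i, ∫ ω, g i ω ∂μ = gradf i (x i))
    (σ : Fin N → ℝ)
    (hvar : ∀ i, ∫ ω, ‖g i ω - gradf i (x i)‖ ^ 2 ∂μ ≤ (σ i) ^ 2)
    (η : ℝ) (hη : 0 ≤ η) :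
    (∫ ω, ‖((N : ℝ)⁻¹ • ∑ i, x i - (η / N) • ∑ i, g i ω) - xstar‖ ^ 2 ∂μ)
      ≤ ‖(N : ℝ)⁻¹ • (∑ i, x i) - xstar‖ ^ 2
        + η ^ 2 / N * ((N : ℝ)⁻¹ * ∑ i, (σ i) ^ 2)
        + 2 * η * (2 * L * η - 1)
            * ((N : ℝ)⁻¹ * ∑ i, f i ((N : ℝ)⁻¹ • ∑ j, x j) - (N : ℝ)⁻¹ * ∑ i, f i xstar)
        + (L * η / N) * (2 * L * η + 1) * ∑ i, ‖(N : ℝ)⁻¹ • (∑ j, x j) - x i‖ ^ 2 := by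
  have hNpos : (0:ℝ) < N := by exact_mod_cast Nat.lt_of_lt_of_le Nat.zero_lt_one hN
  set A : EuclideanSpace ℝ (Fin d) :=
    (N : ℝ)⁻¹ • (∑ i, x i) - (η / N) • ∑ i, gradf i (x i) - xstar with hA
  have hint_eq : (fun ω => ‖((N : ℝ)⁻¹ • ∑ i, x i - (η / N) • ∑ i, g i ω) - xstar‖ ^ 2)
      = fun ω => ‖A - (η / N) • (∑ i, g i ω - ∑ i, gradf i (x i))‖ ^ 2 := by
    funext ω
    congr 1
    rw [hA, smul_sub]
    abel
  have hstoch := stoch_ineq μ hN g hgmeas hindep hL2 (fun i => gradf i (x i)) hmean σ hvar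
    A (η / N)
  have hdet := det_ineq hN f gradf hgrad L hL hsmooth hconv xstar hstar x η hη
  rw [← hA] at hdet
  have hconst : (η / N) ^ 2 * ∑ i, (σ i) ^ 2
      = η ^ 2 / N * ((N : ℝ)⁻¹ * ∑ i, (σ i) ^ 2) := by
    ring
  calc (∫ ω, ‖((N : ℝ)⁻¹ • ∑ i, x i - (η / N) • ∑ i, g i ω) - xstar‖ ^ 2 ∂μ)
      = ∫ ω, ‖A - (η / N) • (∑ i, g i ω - ∑ i, gradf i (x i))‖ ^ 2 ∂μ := by rw [hint_eq]
    _ ≤ ‖A‖ ^ 2 + (η / N) ^ 2 * ∑ i, (σ i) ^ 2 := hstoch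
    _ ≤ _ := by
        rw [hconst]
        linarith [hdet]
end

section
/- Let f_1,…,f_N : ℝ^d → ℝ be convex and L-smooth (L > 0), let f = (1/N)Σ_i f_i, and let x* be a global minimizer of f. Then for any points x_1,…,x_N ∈ ℝ^d with x̄ = (1/N)Σ_i x_i, one has ‖(1/N)Σ_i ∇f_i(x_i)‖² ≤ (2L²/N)·Σ_i ‖x_i − x̄‖² + 4L·(f(x̄) − f(x*)). -/
open Finset Set

local notation "⟪" a ", " b "⟫" => inner (𝕜 := ℝ) a b

variable {E : Type*} [NormedAddCommGroup E] [InnerProductSpace ℝ E] [CompleteSpace E]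

/-- Sharp descent lemma. -/
lemma descent (h : E → ℝ) (g : E → E) (hg : ∀ x, HasGradientAt h (g x) x)
    (L : ℝ) (hL : 0 ≤ L) (hlip : ∀ x y, ‖g x - g y‖ ≤ L * ‖x - y‖) (x y : E) :
    h y ≤ h x + ⟪g x, y - x⟫ + L / 2 * ‖y - x‖ ^ 2 := by
  set v := y - x with hv
  set φ : ℝ → ℝ := fun t => h (x + t • v) - t * ⟪g x, v⟫ - h x with hφ
  have hder : ∀ t : ℝ, HasDerivAt φ (⟪g (x + t • v), v⟫ - ⟪g x, v⟫) t := by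
    intro t
    have hline : HasDerivAt (fun t : ℝ => x + t • v) v t := by
      simpa using ((hasDerivAt_id t).smul_const v).const_add x
    have := ((hg (x + t • v)).hasFDerivAt.comp_hasDerivAt t hline)
    have h1 : HasDerivAt (fun t : ℝ => h (x + t • v)) ⟪g (x + t • v), v⟫ t := by
      exact this
    simpa [hφ] using (h1.sub ((hasDerivAt_id t).mul_const ⟪g x, v⟫)).sub_const (h x)
  have hcont : ContinuousOn φ (Icc (0:ℝ) 1) :=
    fun t _ => ((hder t).continuousAt).continuousWithinAt
  have hf' : ∀ t ∈ Ico (0:ℝ) 1,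
      HasDerivWithinAt φ (⟪g (x + t • v), v⟫ - ⟪g x, v⟫) (Ici t) t :=
    fun t _ => (hder t).hasDerivWithinAt
  have ha : ‖φ 0‖ ≤ L * ‖v‖ ^ 2 * (0:ℝ) ^ 2 / 2 := by simp [hφ]
  have hB : ∀ t : ℝ, HasDerivAt (fun t => L * ‖v‖ ^ 2 * t ^ 2 / 2) (L * ‖v‖ ^ 2 * t) t := by
    intro t
    have := ((hasDerivAt_pow 2 t).const_mul (L * ‖v‖ ^ 2)).div_const 2
    convert this using 1
    · rfl
    · rfl
    simp [pow_one]
    ring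
  have bound : ∀ t ∈ Ico (0:ℝ) 1,
      ‖⟪g (x + t • v), v⟫ - ⟪g x, v⟫‖ ≤ L * ‖v‖ ^ 2 * t := by
    intro t ht
    have h1 : ⟪g (x + t • v), v⟫ - ⟪g x, v⟫ = ⟪g (x + t • v) - g x, v⟫ := by
      rw [inner_sub_left]
    rw [Real.norm_eq_abs, h1]
    calc |⟪g (x + t • v) - g x, v⟫| ≤ ‖g (x + t • v) - g x‖ * ‖v‖ :=
          abs_real_inner_le_norm _ _
      _ ≤ L * ‖x + t • v - x‖ * ‖v‖ := by gcongr; exact hlip _ _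
      _ = L * ‖v‖ ^ 2 * t := by
          rw [add_sub_cancel_left, norm_smul, Real.norm_eq_abs, abs_of_nonneg ht.1]
          ring
  have key : ∀ s ∈ Icc (0:ℝ) 1, ‖φ s‖ ≤ L * ‖v‖ ^ 2 * s ^ 2 / 2 := fun s hs =>
    image_norm_le_of_norm_deriv_right_le_deriv_boundary hcont hf' ha hB bound hs
  have h1 := key 1 (by norm_num)
  have h2 : φ 1 = h y - ⟪g x, v⟫ - h x := by simp [hφ, hv]
  rw [h2, Real.norm_eq_abs] at h1
  have := (abs_le.1 (by simpa using h1)).2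
  nlinarith [this]

/-- At a global minimizer `x*`, `‖g x‖² ≤ 2 L (h x - h x*)`. -/
lemma grad_sq_le (h : E → ℝ) (g : E → E) (hg : ∀ x, HasGradientAt h (g x) x)
    (L : ℝ) (hL : 0 < L) (hlip : ∀ x y, ‖g x - g y‖ ≤ L * ‖x - y‖)
    (xstar : E) (hstar : ∀ y, h xstar ≤ h y) (x : E) :
    ‖g x‖ ^ 2 ≤ 2 * L * (h x - h xstar) := by
  have hd := descent h g hg L hL.le hlip x (x - L⁻¹ • g x)
  have h1 : h xstar ≤ h (x - L⁻¹ • g x) := hstar _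
  have h2 : x - L⁻¹ • g x - x = -(L⁻¹ • g x) := by abel
  rw [h2] at hd
  have h3 : ⟪g x, -(L⁻¹ • g x)⟫ = -(L⁻¹ * ‖g x‖ ^ 2) := by
    rw [inner_neg_right, real_inner_smul_right, real_inner_self_eq_norm_sq]
  have h4 : ‖-(L⁻¹ • g x)‖ ^ 2 = L⁻¹ ^ 2 * ‖g x‖ ^ 2 := by
    rw [norm_neg, norm_smul, mul_pow, Real.norm_eq_abs, sq_abs]
  rw [h3, h4] at hd
  have hLne : L ≠ 0 := hL.ne'
  have : h xstar ≤ h x - L⁻¹ * ‖g x‖ ^ 2 + L / 2 * (L⁻¹ ^ 2 * ‖g x‖ ^ 2) :=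
    h1.trans hd
  have hinv : 0 < L⁻¹ := inv_pos.2 hL
  have e1 : L / 2 * (L⁻¹ ^ 2 * ‖g x‖ ^ 2) = L⁻¹ / 2 * ‖g x‖ ^ 2 := by
    field_simp
  have e2 : 0 ≤ h x - h xstar - L⁻¹ / 2 * ‖g x‖ ^ 2 := by linarith [e1 ▸ this]
  have e3 := mul_nonneg hL.le e2
  have e4 : L * (L⁻¹ / 2 * ‖g x‖ ^ 2) = ‖g x‖ ^ 2 / 2 := by
    field_simp
  nlinarith [e3, e4]

/-- for convex `L`-smooth `f_i` with global minimizer `x*` of the average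
`f = (1/N) Σ f_i`, one has
`‖(1/N) Σ ∇f_i(x_i)‖² ≤ (2L²/N) Σ ‖x_i − x̄‖² + 4L (f(x̄) − f(x*))`. -/
theorem stmt5 {d N : ℕ} (hN : 1 ≤ N)
    (f : Fin N → EuclideanSpace ℝ (Fin d) → ℝ)
    (gradf : Fin N → EuclideanSpace ℝ (Fin d) → EuclideanSpace ℝ (Fin d))
    (hgrad : ∀ i x, HasGradientAt (f i) (gradf i x) x)
    (L : ℝ) (hL : 0 < L)
    (hsmooth : ∀ i x y, ‖gradf i x - gradf i y‖ ≤ L * ‖x - y‖)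
    (hconv : ∀ i, ConvexOn ℝ Set.univ (f i))
    (xstar : EuclideanSpace ℝ (Fin d))
    (hstar : ∀ y, (N : ℝ)⁻¹ * ∑ i, f i xstar ≤ (N : ℝ)⁻¹ * ∑ i, f i y)
    (x : Fin N → EuclideanSpace ℝ (Fin d)) :
    ‖(N : ℝ)⁻¹ • ∑ i, gradf i (x i)‖ ^ 2
      ≤ (2 * L ^ 2 / N) * ∑ i, ‖x i - (N : ℝ)⁻¹ • ∑ j, x j‖ ^ 2
        + 4 * L * ((N : ℝ)⁻¹ * ∑ i, f i ((N : ℝ)⁻¹ • ∑ j, x j)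
            - (N : ℝ)⁻¹ * ∑ i, f i xstar) := by
  have hN0 : (0:ℝ) < N := by exact_mod_cast hN
  set c : ℝ := (N : ℝ)⁻¹ with hc
  have hc0 : 0 < c := inv_pos.2 hN0
  set F : EuclideanSpace ℝ (Fin d) → ℝ := fun z => c * ∑ i, f i z with hF
  set G : EuclideanSpace ℝ (Fin d) → EuclideanSpace ℝ (Fin d) := fun z => c • ∑ i, gradf i z with hG
  -- gradient of F
  have hGgrad : ∀ z, HasGradientAt F (G z) z := by
    intro z
    have hsum : HasFDerivAt (fun z : EuclideanSpace ℝ (Fin d) => ∑ i, f i z)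
        (∑ i, (InnerProductSpace.toDual ℝ (EuclideanSpace ℝ (Fin d))) (gradf i z)) z :=
      HasFDerivAt.fun_sum fun i _ => (hgrad i z).hasFDerivAt
    have hmul := hsum.const_mul c
    rw [hasFDerivAt_iff_hasGradientAt] at hmul
    convert hmul using 1
    simp [hG, map_sum]
  -- Lipschitz gradient of F
  have hGlip : ∀ a b : EuclideanSpace ℝ (Fin d), ‖G a - G b‖ ≤ L * ‖a - b‖ := by
    intro a b
    have h1 : G a - G b = c • ∑ i, (gradf i a - gradf i b) := by
      simp [hG, ← smul_sub, Finset.sum_sub_distrib]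
    rw [h1, norm_smul, Real.norm_eq_abs, abs_of_pos hc0]
    have h2 : ‖∑ i, (gradf i a - gradf i b)‖ ≤ ∑ i : Fin N, L * ‖a - b‖ :=
      (norm_sum_le _ _).trans (Finset.sum_le_sum fun i _ => hsmooth i a b)
    rw [Finset.sum_const, Finset.card_univ, Fintype.card_fin, nsmul_eq_mul] at h2
    calc c * ‖∑ i, (gradf i a - gradf i b)‖ ≤ c * (N * (L * ‖a - b‖)) := by
          exact mul_le_mul_of_nonneg_left h2 hc0.le
      _ = L * ‖a - b‖ := by
          field_simp [hc]
          rw [hc, inv_mul_cancel₀ hN0.ne', one_mul]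
  set xbar : EuclideanSpace ℝ (Fin d) := c • ∑ j, x j with hxbar
  have key : ‖G xbar‖ ^ 2 ≤ 2 * L * (F xbar - F xstar) :=
    grad_sq_le F G hGgrad L hL hGlip xstar (fun y => hstar y) xbar
  set a : EuclideanSpace ℝ (Fin d) := c • ∑ i, gradf i (x i) with ha
  -- bound on ‖a - G xbar‖²
  have hdiff : ‖a - G xbar‖ ^ 2 ≤ L ^ 2 / N * ∑ i, ‖x i - xbar‖ ^ 2 := by
    have h1 : a - G xbar = c • ∑ i, (gradf i (x i) - gradf i xbar) := by
      simp [ha, hG, ← smul_sub, Finset.sum_sub_distrib]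
    have h2 : ‖a - G xbar‖ ≤ c * ∑ i, L * ‖x i - xbar‖ := by
      rw [h1, norm_smul, Real.norm_eq_abs, abs_of_pos hc0]
      exact mul_le_mul_of_nonneg_left
        ((norm_sum_le _ _).trans (Finset.sum_le_sum fun i _ => hsmooth i (x i) xbar)) hc0.le
    have h3 : ‖a - G xbar‖ ^ 2 ≤ (c * ∑ i, L * ‖x i - xbar‖) ^ 2 := by
      have := norm_nonneg (a - G xbar)
      nlinarith
    have h4 : (∑ i, L * ‖x i - xbar‖) ^ 2 ≤ N * ∑ i, (L * ‖x i - xbar‖) ^ 2 := by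
      have := sq_sum_le_card_mul_sum_sq (s := Finset.univ)
        (f := fun i : Fin N => L * ‖x i - xbar‖)
      simpa using this
    rw [mul_pow] at h3
    calc ‖a - G xbar‖ ^ 2 ≤ c ^ 2 * (∑ i, L * ‖x i - xbar‖) ^ 2 := h3
      _ ≤ c ^ 2 * (N * ∑ i, (L * ‖x i - xbar‖) ^ 2) := by
          exact mul_le_mul_of_nonneg_left h4 (sq_nonneg c)
      _ = L ^ 2 / N * ∑ i, ‖x i - xbar‖ ^ 2 := by
          rw [Finset.mul_sum, Finset.mul_sum, Finset.mul_sum]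
          refine Finset.sum_congr rfl fun i _ => ?_
          field_simp [hc]
          rw [hc, ← mul_pow, inv_mul_cancel₀ hN0.ne', one_pow, one_mul]
  -- combine
  have hsplit : ‖a‖ ^ 2 ≤ 2 * ‖a - G xbar‖ ^ 2 + 2 * ‖G xbar‖ ^ 2 := by
    have h1 : ‖a‖ ≤ ‖a - G xbar‖ + ‖G xbar‖ := by
      simpa using norm_add_le (a - G xbar) (G xbar)
    nlinarith [norm_nonneg a, norm_nonneg (a - G xbar), norm_nonneg (G xbar),
      sq_nonneg (‖a - G xbar‖ - ‖G xbar‖)]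
  have hfinal : ‖a‖ ^ 2 ≤ 2 * L ^ 2 / N * ∑ i, ‖x i - xbar‖ ^ 2
      + 4 * L * (F xbar - F xstar) := by
    have h2d : 2 * ‖a - G xbar‖ ^ 2 ≤ 2 * (L ^ 2 / ↑N * ∑ i, ‖x i - xbar‖ ^ 2) := by linarith
    have h2k : 2 * ‖G xbar‖ ^ 2 ≤ 2 * (2 * L * (F xbar - F xstar)) := by linarith
    have : 2 * (L ^ 2 / (N:ℝ) * ∑ i, ‖x i - xbar‖ ^ 2) = 2 * L ^ 2 / ↑N * ∑ i, ‖x i - xbar‖ ^ 2 := by ring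
    linarith
  calc ‖a‖ ^ 2 ≤ 2 * L ^ 2 / N * ∑ i, ‖x i - xbar‖ ^ 2 + 4 * L * (F xbar - F xstar) := hfinal
    _ = (2 * L ^ 2 / N) * ∑ i, ‖x i - xbar‖ ^ 2
        + 4 * L * (c * ∑ i, f i xbar - c * ∑ i, f i xstar) := by rw [hF]
end

section
/- Let f_1,…,f_N : ℝ^d → ℝ be convex and L-smooth (L > 0), let f = (1/N)Σ_i f_i, let x* ∈ ℝ^d be any point, and let η ≥ 0. Then for any points x_1,…,x_N ∈ ℝ^d with x̄ = (1/N)Σ_i x_i, one has −(2η/N)·Σ_i ⟨x̄ − x*, ∇f_i(x_i)⟩ ≤ −2η·(f(x̄) − f(x*)) + (Lη/N)·Σ_i ‖x̄ − x_i‖². -/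
open scoped RealInnerProductSpace

section Aux

variable {d : ℕ}

local notation "E" => EuclideanSpace ℝ (Fin d)

lemma aux_hasDerivAt (g : E → ℝ) (G : E → E) (hg : ∀ p, HasGradientAt g (G p) p)
    (u v : E) (t : ℝ) :
    HasDerivAt (fun s : ℝ => g (u + s • (v - u))) ⟪G (u + t • (v - u)), v - u⟫ t := by
  have hγ : HasDerivAt (fun s : ℝ => u + s • (v - u)) (v - u) t := by
    simpa using ((hasDerivAt_id t).smul_const (v - u)).const_add u
  have := ((hg (u + t • (v - u))).hasFDerivAt).comp_hasDerivAt t hγ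
  simp [InnerProductSpace.toDual_apply_apply] at this
  exact this

/-- First-order convexity lower bound. -/
lemma aux_convex (g : E → ℝ) (G : E → E) (hg : ∀ p, HasGradientAt g (G p) p)
    (hc : ConvexOn ℝ Set.univ g) (u v : E) :
    ⟪G u, v - u⟫ ≤ g v - g u := by
  set φ : ℝ → ℝ := fun s => g (u + s • (v - u)) with hφ
  have hφc : ConvexOn ℝ Set.univ φ := by
    have := hc.comp_affineMap (AffineMap.lineMap u v : ℝ →ᵃ[ℝ] E)
    simp only [Set.preimage_univ] at this
    convert this using 1
    iterate 4 rfl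
    funext s
    simp [hφ, AffineMap.lineMap_apply, add_comm]
  have h0 : HasDerivAt φ ⟪G u, v - u⟫ 0 := by
    simpa using aux_hasDerivAt g G hg u v 0
  have := hφc.le_slope_of_hasDerivAt (Set.mem_univ 0) (Set.mem_univ 1) one_pos h0
  simpa [φ, slope_def_field] using this

/-- Descent lemma: smoothness upper bound. -/
lemma aux_smooth (g : E → ℝ) (G : E → E) (hg : ∀ p, HasGradientAt g (G p) p)
    (L : ℝ) (hL : 0 ≤ L) (hsm : ∀ p q, ‖G p - G q‖ ≤ L * ‖p - q‖) (u v : E) :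
    g v ≤ g u + ⟪G u, v - u⟫ + L / 2 * ‖v - u‖ ^ 2 := by
  set ψ : ℝ → ℝ := fun s =>
    g (u + s • (v - u)) - s * ⟪G u, v - u⟫ - L / 2 * s ^ 2 * ‖v - u‖ ^ 2 with hψ
  have hψd : ∀ t : ℝ, HasDerivAt ψ
      (⟪G (u + t • (v - u)), v - u⟫ - ⟪G u, v - u⟫ - L * t * ‖v - u‖ ^ 2) t := by
    intro t
    have h1 := aux_hasDerivAt g G hg u v t
    have h2 : HasDerivAt (fun s : ℝ => s * ⟪G u, v - u⟫) ⟪G u, v - u⟫ t := by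
      simpa using (hasDerivAt_id t).mul_const _
    have h3 : HasDerivAt (fun s : ℝ => L / 2 * s ^ 2 * ‖v - u‖ ^ 2)
        (L * t * ‖v - u‖ ^ 2) t := by
      have : HasDerivAt (fun s : ℝ => s ^ 2) (2 * t) t := by
        simpa using hasDerivAt_pow 2 t
      have := (this.const_mul (L / 2)).mul_const (‖v - u‖ ^ 2)
      convert this using 1
      iterate 2 rfl
      ring
    exact (h1.sub h2).sub h3
  have hanti : AntitoneOn ψ (Set.Icc (0 : ℝ) 1) := by
    apply antitoneOn_of_deriv_nonpos (convex_Icc 0 1)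
    · exact fun t _ => ((hψd t).continuousAt).continuousWithinAt
    · exact fun t _ => ((hψd t).differentiableAt).differentiableWithinAt
    · intro t ht
      rw [interior_Icc] at ht
      rw [(hψd t).deriv]
      have hinner : ⟪G (u + t • (v - u)) - G u, v - u⟫ ≤ L * t * ‖v - u‖ ^ 2 := by
        calc ⟪G (u + t • (v - u)) - G u, v - u⟫
            ≤ ‖G (u + t • (v - u)) - G u‖ * ‖v - u‖ := real_inner_le_norm _ _
          _ ≤ (L * ‖(u + t • (v - u)) - u‖) * ‖v - u‖ := by
              exact mul_le_mul_of_nonneg_right (hsm _ _) (norm_nonneg _)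
          _ = L * t * ‖v - u‖ ^ 2 := by
              rw [add_sub_cancel_left, norm_smul]
              simp [abs_of_pos ht.1]
              ring
      have := inner_sub_left (𝕜 := ℝ) (G (u + t • (v - u))) (G u) (v - u)
      rw [this] at hinner
      linarith
  have h01 := hanti (Set.left_mem_Icc.2 one_pos.le) (Set.right_mem_Icc.2 one_pos.le)
    zero_le_one
  simp only [hψ, zero_smul, add_zero, one_smul, zero_mul, mul_zero, sub_zero,
    zero_pow, one_pow, mul_one, add_sub_cancel] at h01
  nlinarith [h01]

end Aux

/-- for convex `L`-smooth `f_i`, any point `x*`, any `η ≥ 0`, and any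
points `x_1,…,x_N` with average `x̄`,
`−(2η/N) Σ ⟨x̄ − x*, ∇f_i(x_i)⟩ ≤ −2η (f(x̄) − f(x*)) + (Lη/N) Σ ‖x̄ − x_i‖²`. -/
theorem stmt6 {d N : ℕ} (hN : 1 ≤ N)
    (f : Fin N → EuclideanSpace ℝ (Fin d) → ℝ)
    (gradf : Fin N → EuclideanSpace ℝ (Fin d) → EuclideanSpace ℝ (Fin d))
    (hgrad : ∀ i x, HasGradientAt (f i) (gradf i x) x)
    (L : ℝ) (hL : 0 < L)
    (hsmooth : ∀ i x y, ‖gradf i x - gradf i y‖ ≤ L * ‖x - y‖)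
    (hconv : ∀ i, ConvexOn ℝ Set.univ (f i))
    (xstar : EuclideanSpace ℝ (Fin d)) (η : ℝ) (hη : 0 ≤ η)
    (x : Fin N → EuclideanSpace ℝ (Fin d)) :
    -(2 * η / N) * ∑ i, ⟪(N : ℝ)⁻¹ • (∑ j, x j) - xstar, gradf i (x i)⟫
      ≤ -(2 * η) * ((N : ℝ)⁻¹ * ∑ i, f i ((N : ℝ)⁻¹ • ∑ j, x j)
            - (N : ℝ)⁻¹ * ∑ i, f i xstar)
        + (L * η / N) * ∑ i, ‖(N : ℝ)⁻¹ • (∑ j, x j) - x i‖ ^ 2 := by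
  set xbar : EuclideanSpace ℝ (Fin d) := (N : ℝ)⁻¹ • (∑ j, x j) with hxbar
  have key : ∀ i, f i xbar - f i xstar - L / 2 * ‖xbar - x i‖ ^ 2
      ≤ ⟪xbar - xstar, gradf i (x i)⟫ := by
    intro i
    have hA := aux_convex (f i) (gradf i) (hgrad i) (hconv i) (x i) xstar
    have hB := aux_smooth (f i) (gradf i) (hgrad i) L hL.le (hsmooth i) (x i) xbar
    have e1 : ⟪gradf i (x i), xbar - x i⟫ - ⟪gradf i (x i), xstar - x i⟫
        = ⟪xbar - xstar, gradf i (x i)⟫ := by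
      rw [← inner_sub_right, real_inner_comm]
      congr 1
      abel
    linarith [hA, hB, e1.ge, e1.le]
  have hsum : ∑ i, (f i xbar - f i xstar - L / 2 * ‖xbar - x i‖ ^ 2)
      ≤ ∑ i, ⟪xbar - xstar, gradf i (x i)⟫ :=
    Finset.sum_le_sum fun i _ => key i
  have hNpos : (0 : ℝ) < N := by exact_mod_cast hN
  have hc : (0 : ℝ) ≤ 2 * η / N := by positivity
  have hmul : -(2 * η / N) * ∑ i, ⟪xbar - xstar, gradf i (x i)⟫
      ≤ -(2 * η / N) * ∑ i, (f i xbar - f i xstar - L / 2 * ‖xbar - x i‖ ^ 2) := by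
    rw [neg_mul, neg_mul, neg_le_neg_iff]
    exact mul_le_mul_of_nonneg_left hsum hc
  refine hmul.trans (le_of_eq ?_)
  rw [Finset.sum_sub_distrib, Finset.sum_sub_distrib, ← Finset.mul_sum]
  field_simp
  ring
end

section
/- Let p ∈ (0,1], τ̂ ≥ 0, and let B ≥ 1 and t ≥ B be integers. Suppose W^(k) ∈ ℝ^{N×N} for k = t−B,…,t−1 are doubly stochastic matrices each satisfying the p-mixing contraction, and G^(k) ∈ ℝ^{d×N} for k = t−B+1,…,t−1 satisfy ‖G^(k) − Ḡ^(k)‖_F² ≤ τ̂. Then Σ_{k=t−B+1}^{t−1} ‖ G^(k) · (∏_{j=k}^{t−1} W^(j)) · (I − 11ᵀ/N) ‖_F² ≤ τ̂·(1−p)/p, where each product ∏ is taken with the factors multiplied left to right in increasing order of j and I is the N×N identity matrix. -/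
/-- The `N × N` matrix `𝟙𝟙ᵀ/N`, all of whose entries equal `1/N`. -/
noncomputable def avgMat (N : ℕ) : Matrix (Fin N) (Fin N) ℝ :=
  Matrix.of fun _ _ => 1 / (N : ℝ)

/-- The squared Frobenius norm `‖A‖_F² = Σ_{i,j} A_{ij}²`. -/
def frobSq {m n : ℕ} (M : Matrix (Fin m) (Fin n) ℝ) : ℝ :=
  ∑ i, ∑ j, (M i j) ^ 2

/-- `W` is doubly stochastic: nonnegative entries, all row sums and column sums equal `1`. -/
def DoublyStochastic {N : ℕ} (W : Matrix (Fin N) (Fin N) ℝ) : Prop :=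
  (∀ i j, 0 ≤ W i j) ∧ (∀ i, ∑ j, W i j = 1) ∧ (∀ j, ∑ i, W i j = 1)

/-- `W` satisfies the `p`-mixing contraction:
`‖MW − M̄‖_F² ≤ (1−p) ‖M − M̄‖_F²` for every `d ≥ 1` and every `M ∈ ℝ^{d×N}`,
where `M̄ = M (𝟙𝟙ᵀ/N)`. (The case `d = 0` is trivial.) -/
def MixingContraction {N : ℕ} (p : ℝ) (W : Matrix (Fin N) (Fin N) ℝ) : Prop :=
  ∀ (d : ℕ) (M : Matrix (Fin d) (Fin N) ℝ),
    frobSq (M * W - M * avgMat N) ≤ (1 - p) * frobSq (M - M * avgMat N)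

/-- `∏_{j=a}^{a+m-1} W^{(j)}`, factors multiplied left to right in increasing index order. -/
noncomputable def prodFrom {N : ℕ} (W : ℕ → Matrix (Fin N) (Fin N) ℝ) (a m : ℕ) :
    Matrix (Fin N) (Fin N) ℝ :=
  ((List.range m).map fun j => W (a + j)).prod

lemma frobSq_nonneg {m n : ℕ} (M : Matrix (Fin m) (Fin n) ℝ) : 0 ≤ frobSq M := by
  refine Finset.sum_nonneg fun i _ => Finset.sum_nonneg fun j _ => sq_nonneg _

lemma mul_avg {N : ℕ} {W : Matrix (Fin N) (Fin N) ℝ} (h : DoublyStochastic W) :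
    W * avgMat N = avgMat N := by
  ext i j
  simp only [Matrix.mul_apply, avgMat, Matrix.of_apply]
  rw [← Finset.sum_mul, h.2.1 i, one_mul]

lemma prodFrom_succ {N : ℕ} (W : ℕ → Matrix (Fin N) (Fin N) ℝ) (a m : ℕ) :
    prodFrom W a (m + 1) = prodFrom W a m * W (a + m) := by
  simp [prodFrom, List.range_succ]

lemma key {d N : ℕ} (p : ℝ) (hq : 0 ≤ 1 - p) (W : ℕ → Matrix (Fin N) (Fin N) ℝ)
    (M : Matrix (Fin d) (Fin N) ℝ) (k : ℕ) :
    ∀ m, (∀ i < m, DoublyStochastic (W (k + i)) ∧ MixingContraction p (W (k + i))) →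
      frobSq (M * prodFrom W k m - M * prodFrom W k m * avgMat N)
        ≤ (1 - p) ^ m * frobSq (M - M * avgMat N) := by
  intro m
  induction m with
  | zero => intro _; simp [prodFrom]
  | succ m ih =>
    intro h
    have hds := (h m (Nat.lt_succ_self m)).1
    have hmx := (h m (Nat.lt_succ_self m)).2
    rw [prodFrom_succ]
    set P := M * prodFrom W k m with hP
    have h1 : M * (prodFrom W k m * W (k + m)) = P * W (k + m) := by
      rw [hP, Matrix.mul_assoc]
    have h2 : P * W (k + m) * avgMat N = P * avgMat N := by
      rw [Matrix.mul_assoc, mul_avg hds]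
    rw [h1, h2]
    calc frobSq (P * W (k + m) - P * avgMat N) ≤ (1 - p) * frobSq (P - P * avgMat N) :=
          hmx d P
      _ ≤ (1 - p) * ((1 - p) ^ m * frobSq (M - M * avgMat N)) := by
          apply mul_le_mul_of_nonneg_left _ hq
          exact ih fun i hi => h i (hi.trans (Nat.lt_succ_self m))
      _ = (1 - p) ^ (m + 1) * frobSq (M - M * avgMat N) := by ring


/-- with doubly stochastic `p`-mixing matrices `W^{(k)}` for
`k = t−B,…,t−1` and gradient matrices with `‖G^{(k)} − Ḡ^{(k)}‖_F² ≤ τ̂` for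
`k = t−B+1,…,t−1`,
`Σ_{k=t−B+1}^{t−1} ‖G^{(k)} (∏_{j=k}^{t−1} W^{(j)}) (I − 𝟙𝟙ᵀ/N)‖_F² ≤ τ̂ (1−p)/p`. -/
theorem stmt8 {d N : ℕ} (p : ℝ) (hp0 : 0 < p) (hp1 : p ≤ 1)
    (τhat : ℝ) (hτ : 0 ≤ τhat) (B t : ℕ) (hB : 1 ≤ B) (ht : B ≤ t)
    (W : ℕ → Matrix (Fin N) (Fin N) ℝ) (G : ℕ → Matrix (Fin d) (Fin N) ℝ)
    (hDS : ∀ k ∈ Finset.Ico (t - B) t, DoublyStochastic (W k))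
    (hmix : ∀ k ∈ Finset.Ico (t - B) t, MixingContraction p (W k))
    (hG : ∀ k ∈ Finset.Ico (t - B + 1) t, frobSq (G k - G k * avgMat N) ≤ τhat) :
    ∑ k ∈ Finset.Ico (t - B + 1) t,
        frobSq (G k * prodFrom W k (t - k) * (1 - avgMat N))
      ≤ τhat * (1 - p) / p := by
  have hq : 0 ≤ 1 - p := by linarith
  -- bound each term
  have hterm : ∀ k ∈ Finset.Ico (t - B + 1) t,
      frobSq (G k * prodFrom W k (t - k) * (1 - avgMat N)) ≤ (1 - p) ^ (t - k) * τhat := by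
    intro k hk
    rw [Finset.mem_Ico] at hk
    have hrw : G k * prodFrom W k (t - k) * (1 - avgMat N)
        = G k * prodFrom W k (t - k) - G k * prodFrom W k (t - k) * avgMat N := by
      rw [Matrix.mul_sub, Matrix.mul_one]
    rw [hrw]
    have hmem : ∀ i < t - k, k + i ∈ Finset.Ico (t - B) t := by
      intro i hi
      rw [Finset.mem_Ico]
      constructor
      · omega
      · omega
    calc frobSq (G k * prodFrom W k (t - k) - G k * prodFrom W k (t - k) * avgMat N)
        ≤ (1 - p) ^ (t - k) * frobSq (G k - G k * avgMat N) :=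
          key p hq W (G k) k (t - k) fun i hi => ⟨hDS _ (hmem i hi), hmix _ (hmem i hi)⟩
      _ ≤ (1 - p) ^ (t - k) * τhat := by
          apply mul_le_mul_of_nonneg_left (hG k (Finset.mem_Ico.mpr hk)) (pow_nonneg hq _)
  refine le_trans (Finset.sum_le_sum hterm) ?_
  -- reindex: k ↦ t - k maps Ico (t-B+1) t to Ico 1 B
  have hreindex : ∑ k ∈ Finset.Ico (t - B + 1) t, (1 - p) ^ (t - k) * τhat
      = ∑ m ∈ Finset.Ico 1 B, (1 - p) ^ m * τhat := by
    apply Finset.sum_nbij' (fun k => t - k) (fun m => t - m)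
    · intro a ha; rw [Finset.mem_Ico] at *; omega
    · intro a ha; rw [Finset.mem_Ico] at *; omega
    · intro a ha; rw [Finset.mem_Ico] at ha; omega
    · intro a ha; rw [Finset.mem_Ico] at ha; omega
    · intro a _; rfl
  rw [hreindex, ← Finset.sum_mul]
  -- geometric sum bound
  have hgeom : ∑ m ∈ Finset.Ico 1 B, (1 - p) ^ m ≤ (1 - p) / p := by
    have h1 : ∑ m ∈ Finset.range B, (1 - p) ^ m ≤ 1 / p := by
      have := geom_sum_mul (1 - p) B
      have hkey : (∑ i ∈ Finset.range B, (1 - p) ^ i) * p = 1 - (1 - p) ^ B := by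
        nlinarith [this]
      rw [div_eq_inv_mul, le_inv_mul_iff₀ hp0, mul_comm]
      nlinarith [pow_nonneg hq B]
    have h2 : ∑ m ∈ Finset.range B, (1 - p) ^ m
        = 1 + ∑ m ∈ Finset.Ico 1 B, (1 - p) ^ m := by
      rw [Finset.range_eq_Ico, ← Finset.sum_Ico_consecutive _ (Nat.zero_le 1) hB]
      simp
    have : (1 - p) / p = 1 / p - 1 := by field_simp
    linarith
  calc (∑ m ∈ Finset.Ico 1 B, (1 - p) ^ m) * τhat ≤ ((1 - p) / p) * τhat :=
        mul_le_mul_of_nonneg_right hgeom hτ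
    _ = τhat * (1 - p) / p := by ring
end

section
/- Let G ∈ ℝ^{d×N} satisfy ‖G − Ḡ‖_F² ≤ τ̂ for some τ̂ ≥ 0, and let ψ ∈ ℝ^{N×N} satisfy ψ1 = 1 and 1ᵀψ = 1ᵀ (all row sums and all column sums equal 1) together with ‖ψ − 11ᵀ/N‖_F² ≤ K for some K ≥ 0. Then ‖ G·ψ·(I − 11ᵀ/N) ‖_F² ≤ τ̂·K, where I is the N×N identity matrix. -/
lemma frobSq_mul_le {m n p : ℕ} (A : Matrix (Fin m) (Fin n) ℝ)
    (B : Matrix (Fin n) (Fin p) ℝ) : frobSq (A * B) ≤ frobSq A * frobSq B := by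
  have h : frobSq (A * B) ≤ ∑ i, ∑ j, (∑ k, (A i k) ^ 2) * (∑ k, (B k j) ^ 2) := by
    apply Finset.sum_le_sum; intro i _
    apply Finset.sum_le_sum; intro j _
    simpa [Matrix.mul_apply] using
      Finset.sum_mul_sq_le_sq_mul_sq Finset.univ (fun k => A i k) (fun k => B k j)
  calc frobSq (A * B) ≤ ∑ i, ∑ j, (∑ k, (A i k) ^ 2) * (∑ k, (B k j) ^ 2) := h
    _ = frobSq A * frobSq B := by
        unfold frobSq
        rw [← Finset.sum_mul_sum]
        congr 1
        rw [Finset.sum_comm]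

/-- if `‖G − Ḡ‖_F² ≤ τ̂`, and `ψ` has all row and column sums equal to `1`
with `‖ψ − 𝟙𝟙ᵀ/N‖_F² ≤ K`, then `‖G ψ (I − 𝟙𝟙ᵀ/N)‖_F² ≤ τ̂ K`. -/
theorem stmt9 {d N : ℕ} (G : Matrix (Fin d) (Fin N) ℝ) (τhat : ℝ) (hτ : 0 ≤ τhat)
    (hG : frobSq (G - G * avgMat N) ≤ τhat)
    (ψ : Matrix (Fin N) (Fin N) ℝ)
    (hrow : ∀ i, ∑ j, ψ i j = 1) (hcol : ∀ j, ∑ i, ψ i j = 1)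
    (K : ℝ) (hK : 0 ≤ K) (hψ : frobSq (ψ - avgMat N) ≤ K) :
    frobSq (G * ψ * (1 - avgMat N)) ≤ τhat * K := by
  have hN : (N : ℝ) ≠ 0 ∨ N = 0 := by
    rcases Nat.eq_zero_or_pos N with h | h
    · exact Or.inr h
    · exact Or.inl (by exact_mod_cast h.ne')
  have hPψ : avgMat N * ψ = avgMat N := by
    ext i j
    simp only [Matrix.mul_apply, avgMat, Matrix.of_apply]
    rw [← Finset.mul_sum, hcol j, mul_one]
  have hψP : ψ * avgMat N = avgMat N := by
    ext i j
    simp only [Matrix.mul_apply, avgMat, Matrix.of_apply]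
    rw [← Finset.sum_mul, hrow i, one_mul]
  have hPP : avgMat N * avgMat N = avgMat N := by
    ext i j
    simp only [Matrix.mul_apply, avgMat, Matrix.of_apply, Finset.sum_const,
      Finset.card_univ, Fintype.card_fin, nsmul_eq_mul]
    rcases hN with h | h
    · field_simp
    · exact absurd i.2 (by omega)
  have key : G * ψ * (1 - avgMat N) = (G - G * avgMat N) * (ψ - avgMat N) := by
    rw [Matrix.mul_sub, Matrix.mul_one, Matrix.sub_mul, Matrix.mul_sub, Matrix.mul_sub,
      Matrix.mul_assoc G (avgMat N) ψ, hPψ, Matrix.mul_assoc G (avgMat N) (avgMat N), hPP,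
      Matrix.mul_assoc G ψ (avgMat N), hψP]
    abel
  rw [key]
  calc frobSq ((G - G * avgMat N) * (ψ - avgMat N))
      ≤ frobSq (G - G * avgMat N) * frobSq (ψ - avgMat N) := frobSq_mul_le _ _
    _ ≤ τhat * K := by
        apply mul_le_mul hG hψ (frobSq_nonneg _) hτ
end

section
/- Let W be an N×N doubly stochastic real matrix and let λ₂(WᵀW) denote the second largest eigenvalue (counted with multiplicity) of the symmetric positive semidefinite matrix WᵀW. Then for every d ≥ 1 and every matrix M ∈ ℝ^{d×N}, ‖MW − M̄‖_F² ≤ λ₂(WᵀW)·‖M − M̄‖_F². In other words, W satisfies the p-mixing contraction with p = 1 − λ₂(WᵀW). -/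
/-- `a` is the second largest value (counted with multiplicity) of the tuple `v`:
there is an index `i` achieving the maximum of `v` such that `a` is the greatest value of
`v` over the remaining indices. -/
def IsSecondLargest {N : ℕ} (v : Fin N → ℝ) (a : ℝ) : Prop :=
  ∃ i : Fin N, (∀ k, v k ≤ v i) ∧ IsGreatest {x : ℝ | ∃ j, j ≠ i ∧ v j = x} a

open Matrix
lemma euclid_sum_apply {N : ℕ} (f : Fin N → EuclideanSpace ℝ (Fin N)) (k : Fin N) :
    (∑ i, f i) k = ∑ i, f i k := by
  rw [WithLp.ofLp_sum]; exact Finset.sum_apply k Finset.univ _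

lemma ds_contract {N : ℕ} (W : Matrix (Fin N) (Fin N) ℝ) (hDS : DoublyStochastic W)
    (x : Fin N → ℝ) : ∑ i, (W *ᵥ x) i ^ 2 ≤ ∑ j, x j ^ 2 := by
  obtain ⟨hpos, hrow, hcol⟩ := hDS
  have h1 : ∀ i, (W *ᵥ x) i ^ 2 ≤ ∑ j, W i j * x j ^ 2 := by
    intro i
    have := Finset.sum_sq_le_sum_mul_sum_of_sq_eq_mul Finset.univ
      (r := fun j => W i j * x j) (f := fun j => W i j) (g := fun j => W i j * x j ^ 2)
      (fun j _ => hpos i j) (fun j _ => mul_nonneg (hpos i j) (sq_nonneg _))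
      (fun j _ => by ring)
    simpa [Matrix.mulVec, dotProduct, hrow i] using this
  calc ∑ i, (W *ᵥ x) i ^ 2 ≤ ∑ i, ∑ j, W i j * x j ^ 2 := Finset.sum_le_sum fun i _ => h1 i
    _ = ∑ j, (∑ i, W i j) * x j ^ 2 := by rw [Finset.sum_comm]; simp [Finset.sum_mul]
    _ = ∑ j, x j ^ 2 := by simp [hcol]

lemma quad_eq {N : ℕ} (W : Matrix (Fin N) (Fin N) ℝ) (z : Fin N → ℝ) :
    ∑ k, z k * ((W.transpose * W) *ᵥ z) k = ∑ m, (W *ᵥ z) m ^ 2 := by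
  have h : z ⬝ᵥ ((W.transpose * W) *ᵥ z) = (W *ᵥ z) ⬝ᵥ (W *ᵥ z) := by
    rw [← Matrix.mulVec_mulVec, Matrix.dotProduct_mulVec, Matrix.vecMul_transpose]
  simpa [dotProduct, sq] using h

lemma star_lemma {N : ℕ} (W : Matrix (Fin N) (Fin N) ℝ) (hDS : DoublyStochastic W)
    (hA : (W.transpose * W).IsHermitian) (lam2 : ℝ)
    (hlam2 : IsSecondLargest hA.eigenvalues lam2) :
    0 ≤ lam2 ∧ ∀ (y : Fin N → ℝ), (∑ k, y k = 0) →
      ∑ k, y k * ((W.transpose * W) *ᵥ y) k ≤ lam2 * ∑ k, y k ^ 2 := by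
  obtain ⟨i₀, htop, ⟨j₀, hj₀ne, hj₀⟩, hub⟩ := hlam2
  set A := W.transpose * W with hAdef
  set b := hA.eigenvectorBasis with hbdef
  set μ := hA.eigenvalues with hμdef
  set C : (Fin N → ℝ) → Fin N → ℝ := fun z j => ∑ l, b j l * z l with hCdef
  -- pointwise eigen equation
  have hmulvec : ∀ j k, (A *ᵥ fun l => b j l) k = μ j * b j k := by
    intro j k
    have h := hA.mulVec_eigenvectorBasis j
    have := congrFun h k
    simpa using this
  -- orthonormality (only diagonal needed)
  have hortho : ∀ j, ∑ k, b j k * b j k = 1 := by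
    intro j
    have h := b.orthonormal
    rw [orthonormal_iff_ite] at h
    have := h j j
    rw [if_pos rfl, PiLp.inner_apply] at this
    simpa [RCLike.inner_apply, sq] using this
  -- expansion in the eigenbasis
  have hexp : ∀ (z : Fin N → ℝ) (k : Fin N), z k = ∑ j, C z j * b j k := by
    intro z k
    have h := b.sum_repr' (WithLp.toLp 2 z)
    have hk := congrFun (congrArg WithLp.ofLp h) k
    change _ = z k at hk
    rw [← hk, euclid_sum_apply]
    simp [PiLp.inner_apply, RCLike.inner_apply, PiLp.smul_apply, smul_eq_mul, hCdef, mul_comm]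
  -- mulVec in coordinates
  have hAz : ∀ (z : Fin N → ℝ) (k : Fin N), (A *ᵥ z) k = ∑ j, C z j * (μ j * b j k) := by
    intro z k
    calc (A *ᵥ z) k = ∑ l, A k l * z l := rfl
      _ = ∑ l, A k l * ∑ j, C z j * b j l :=
          Finset.sum_congr rfl fun l _ => by rw [← hexp z l]
      _ = ∑ l, ∑ j, C z j * (A k l * b j l) :=
          Finset.sum_congr rfl fun l _ => by
            rw [Finset.mul_sum]; exact Finset.sum_congr rfl fun j _ => by ring
      _ = ∑ j, ∑ l, C z j * (A k l * b j l) := Finset.sum_comm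
      _ = ∑ j, C z j * ((A *ᵥ fun l => b j l) k) :=
          Finset.sum_congr rfl fun j _ => by rw [← Finset.mul_sum]; rfl
      _ = ∑ j, C z j * (μ j * b j k) :=
          Finset.sum_congr rfl fun j _ => by rw [hmulvec]
  have hq : ∀ z : Fin N → ℝ, ∑ k, z k * (A *ᵥ z) k = ∑ j, μ j * C z j ^ 2 := by
    intro z
    calc ∑ k, z k * (A *ᵥ z) k = ∑ k, ∑ j, (C z j * μ j) * (b j k * z k) := by
          refine Finset.sum_congr rfl fun k _ => ?_
          rw [hAz z k, Finset.mul_sum]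
          exact Finset.sum_congr rfl fun j _ => by ring
      _ = ∑ j, ∑ k, (C z j * μ j) * (b j k * z k) := Finset.sum_comm
      _ = ∑ j, (C z j * μ j) * ∑ k, b j k * z k :=
          Finset.sum_congr rfl fun j _ => by rw [Finset.mul_sum]
      _ = ∑ j, μ j * C z j ^ 2 := by
          refine Finset.sum_congr rfl fun j _ => ?_
          have h : ∑ k, b j k * z k = C z j := rfl
          rw [h]; ring
  have hn : ∀ z : Fin N → ℝ, ∑ k, z k ^ 2 = ∑ j, C z j ^ 2 := by
    intro z
    calc ∑ k, z k ^ 2 = ∑ k, ∑ j, C z j * (b j k * z k) := by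
          refine Finset.sum_congr rfl fun k _ => ?_
          have h : z k ^ 2 = (∑ j, C z j * b j k) * z k := by rw [← hexp z k]; ring
          rw [h, Finset.sum_mul]
          exact Finset.sum_congr rfl fun j _ => by ring
      _ = ∑ j, ∑ k, C z j * (b j k * z k) := Finset.sum_comm
      _ = ∑ j, C z j * ∑ k, b j k * z k :=
          Finset.sum_congr rfl fun j _ => by rw [Finset.mul_sum]
      _ = ∑ j, C z j ^ 2 := by
          refine Finset.sum_congr rfl fun j _ => ?_
          have h : ∑ k, b j k * z k = C z j := rfl
          rw [h]; ring
  have hRay : ∀ j, μ j = ∑ m, (W *ᵥ fun l => b j l) m ^ 2 := by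
    intro j
    have h1 : ∑ k, b j k * (A *ᵥ fun l => b j l) k = μ j := by
      calc ∑ k, b j k * (A *ᵥ fun l => b j l) k = ∑ k, μ j * (b j k * b j k) := by
            refine Finset.sum_congr rfl fun k _ => ?_
            rw [hmulvec]; ring
        _ = μ j * ∑ k, b j k * b j k := by rw [Finset.mul_sum]
        _ = μ j := by rw [hortho j, mul_one]
    rw [← h1, hAdef, quad_eq]
  have hμ0 : ∀ j, 0 ≤ μ j := fun j =>
    (hRay j) ▸ Finset.sum_nonneg fun m _ => sq_nonneg _
  have hμ1 : ∀ j, μ j ≤ 1 := by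
    intro j
    have h1 := ds_contract W hDS (fun l => b j l)
    have h2 : ∑ l, b j l ^ 2 = 1 := by
      rw [← hortho j]; exact Finset.sum_congr rfl fun l _ => sq (b j l)
    rw [h2] at h1
    rw [hRay j]; exact h1
  have hub' : ∀ j, j ≠ i₀ → μ j ≤ lam2 := fun j h => hub ⟨j, h, rfl⟩
  have hlam2nn : 0 ≤ lam2 := hj₀ ▸ hμ0 j₀
  refine ⟨hlam2nn, ?_⟩
  intro y hy
  rw [hq y, hn y, Finset.mul_sum]
  by_cases hcase : μ i₀ ≤ lam2
  · refine Finset.sum_le_sum fun j _ => ?_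
    by_cases hj : j = i₀
    · subst hj; exact mul_le_mul_of_nonneg_right hcase (sq_nonneg _)
    · exact mul_le_mul_of_nonneg_right (hub' j hj) (sq_nonneg _)
  · push_neg at hcase
    set c' : Fin N → ℝ := fun j => ∑ k, b j k with hc'def
    have hc'eig : ∀ j, μ j * c' j = c' j := by
      intro j
      calc μ j * c' j = ∑ k, μ j * b j k := by rw [Finset.mul_sum]
        _ = ∑ k, (A *ᵥ fun l => b j l) k :=
            Finset.sum_congr rfl fun k _ => (hmulvec j k).symm
        _ = ∑ l, (∑ k, A k l) * b j l := by
            simp only [Matrix.mulVec, dotProduct]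
            rw [Finset.sum_comm]
            exact Finset.sum_congr rfl fun l _ => (Finset.sum_mul _ _ _).symm
        _ = c' j := by
            refine Finset.sum_congr rfl fun l _ => ?_
            have hcolA : ∑ k, A k l = 1 := by
              rw [hAdef]
              simp only [Matrix.mul_apply, Matrix.transpose_apply]
              rw [Finset.sum_comm]
              calc ∑ m, ∑ k, W m k * W m l = ∑ m, (∑ k, W m k) * W m l :=
                    Finset.sum_congr rfl fun m _ => (Finset.sum_mul _ _ _).symm
                _ = ∑ m, W m l := by simp [hDS.2.1]
                _ = 1 := hDS.2.2 l
            rw [hcolA, one_mul]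
    have hzero : ∀ j, j ≠ i₀ → c' j = 0 := by
      intro j hj
      by_contra hne
      have hμj1 : μ j = 1 := by
        have h := hc'eig j
        have : μ j * c' j = 1 * c' j := by rw [h, one_mul]
        exact mul_right_cancel₀ hne this
      have h1 : μ j ≤ lam2 := hub' j hj
      have h2 := hμ1 i₀
      linarith
    have he : ∀ k, (1:ℝ) = c' i₀ * b i₀ k := by
      intro k
      have h := hexp (fun _ => (1:ℝ)) k
      have hC1 : ∀ j, C (fun _ => (1:ℝ)) j = c' j := by
        intro j; simp [hCdef, hc'def]
      calc (1:ℝ) = ∑ j, C (fun _ => (1:ℝ)) j * b j k := h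
        _ = ∑ j, c' j * b j k := Finset.sum_congr rfl fun j _ => by rw [hC1]
        _ = c' i₀ * b i₀ k := by
            rw [Finset.sum_eq_single i₀ (fun j _ hj => by rw [hzero j hj, zero_mul])
              (fun h => absurd (Finset.mem_univ i₀) h)]
    have hc'ne : c' i₀ ≠ 0 := by
      intro h0
      have h := he i₀
      rw [h0, zero_mul] at h
      exact one_ne_zero h
    have hCy : C y i₀ = 0 := by
      have h : c' i₀ * C y i₀ = 0 := by
        calc c' i₀ * C y i₀ = ∑ l, (c' i₀ * b i₀ l) * y l := by
              have h : C y i₀ = ∑ l, b i₀ l * y l := rfl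
              rw [h, Finset.mul_sum]
              exact Finset.sum_congr rfl fun l _ => by ring
          _ = ∑ l, y l := Finset.sum_congr rfl fun l _ => by rw [← he l, one_mul]
          _ = 0 := hy
      exact (mul_eq_zero.mp h).resolve_left hc'ne
    refine Finset.sum_le_sum fun j _ => ?_
    by_cases hj : j = i₀
    · subst hj; rw [hCy]; simp
    · exact mul_le_mul_of_nonneg_right (hub' j hj) (sq_nonneg _)

lemma row_contract {N : ℕ} (W : Matrix (Fin N) (Fin N) ℝ) (hDS : DoublyStochastic W)
    (hA : (W.transpose * W).IsHermitian) (lam2 : ℝ)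
    (hlam2 : IsSecondLargest hA.eigenvalues lam2)
    (x : Fin N → ℝ) (hx : ∑ k, x k = 0) :
    ∑ j, (W.transpose *ᵥ x) j ^ 2 ≤ lam2 * ∑ j, x j ^ 2 := by
  obtain ⟨hl0, hstar⟩ := star_lemma W hDS hA lam2 hlam2
  set y := W.transpose *ᵥ x with hydef
  have hy0 : ∑ j, y j = 0 := by
    simp only [hydef, Matrix.mulVec, dotProduct, Matrix.transpose_apply]
    rw [Finset.sum_comm]
    calc ∑ k, ∑ j, W k j * x k = ∑ k, (∑ j, W k j) * x k :=
          Finset.sum_congr rfl fun k _ => (Finset.sum_mul _ _ _).symm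
      _ = ∑ k, x k := by simp [hDS.2.1]
      _ = 0 := hx
  have h1 : ∑ j, y j ^ 2 = ∑ k, x k * (W *ᵥ y) k := by
    have h : x ⬝ᵥ (W *ᵥ y) = y ⬝ᵥ y := by
      calc x ⬝ᵥ (W *ᵥ y) = (x ᵥ* W) ⬝ᵥ y := Matrix.dotProduct_mulVec x W y
        _ = y ⬝ᵥ y := by rw [hydef, Matrix.mulVec_transpose]
    have h2 : ∑ j, y j ^ 2 = y ⬝ᵥ y := by simp [dotProduct, sq]
    rw [h2, ← h]; rfl
  have h2 : (∑ j, y j ^ 2) ^ 2 ≤ (∑ k, x k ^ 2) * ∑ k, (W *ᵥ y) k ^ 2 := by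
    rw [h1]; exact Finset.sum_mul_sq_le_sq_mul_sq _ _ _
  have h3 : ∑ k, (W *ᵥ y) k ^ 2 ≤ lam2 * ∑ j, y j ^ 2 := by
    rw [← quad_eq]; exact hstar y hy0
  have hS0 : 0 ≤ ∑ j, y j ^ 2 := Finset.sum_nonneg fun _ _ => sq_nonneg _
  have hT0 : 0 ≤ ∑ k, x k ^ 2 := Finset.sum_nonneg fun _ _ => sq_nonneg _
  rcases eq_or_lt_of_le hS0 with h | h
  · rw [← h]; exact mul_nonneg hl0 hT0
  · have h4 : (∑ j, y j ^ 2) ^ 2 ≤ (∑ k, x k ^ 2) * (lam2 * ∑ j, y j ^ 2) :=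
      le_trans h2 (mul_le_mul_of_nonneg_left h3 hT0)
    nlinarith

/-- if `W` is doubly stochastic and `λ₂` is the second largest eigenvalue
(with multiplicity) of the symmetric PSD matrix `WᵀW`, then for every `d ≥ 1` and every
`M ∈ ℝ^{d×N}`, `‖MW − M̄‖_F² ≤ λ₂ ‖M − M̄‖_F²`; i.e. `W` satisfies the `p`-mixing contraction
with `p = 1 − λ₂(WᵀW)`. -/
theorem stmt13 {N : ℕ} (W : Matrix (Fin N) (Fin N) ℝ)
    (hDS : DoublyStochastic W)
    (hA : (W.transpose * W).IsHermitian)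
    (lam2 : ℝ) (hlam2 : IsSecondLargest hA.eigenvalues lam2) :
    ∀ (dd : ℕ) (M : Matrix (Fin dd) (Fin N) ℝ),
      frobSq (M * W - M * avgMat N) ≤ lam2 * frobSq (M - M * avgMat N) := by
  intro dd M
  have hN : (N : ℝ) ≠ 0 := by
    obtain ⟨i₀, -, -, -⟩ := hlam2
    have : N ≠ 0 := by rintro rfl; exact Fin.elim0 i₀
    exact_mod_cast this
  set x : Fin dd → Fin N → ℝ := fun i k => M i k - (∑ l, M i l) / N with hxdef
  have hx0 : ∀ i, ∑ k, x i k = 0 := by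
    intro i
    simp only [hxdef]
    rw [Finset.sum_sub_distrib, Finset.sum_const, Finset.card_univ, Fintype.card_fin,
      nsmul_eq_mul]
    field_simp
    ring
  have havg : ∀ i, ∑ k, M i k * (1 / (N:ℝ)) = (∑ l, M i l) / N := by
    intro i
    rw [Finset.sum_div]
    exact Finset.sum_congr rfl fun k _ => by ring
  have hentry1 : ∀ i j, (M * W - M * avgMat N) i j = (W.transpose *ᵥ x i) j := by
    intro i j
    have hc : ∑ k, W k j = 1 := hDS.2.2 j
    have hR : (W.transpose *ᵥ x i) j
        = ∑ k, M i k * W k j - (∑ k, W k j) * ((∑ l, M i l) / N) := by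
      simp only [Matrix.mulVec, dotProduct, Matrix.transpose_apply, hxdef]
      rw [Finset.sum_mul, ← Finset.sum_sub_distrib]
      exact Finset.sum_congr rfl fun k _ => by ring
    have hL : (M * W - M * avgMat N) i j
        = ∑ k, M i k * W k j - (∑ l, M i l) / N := by
      simp only [Matrix.sub_apply, Matrix.mul_apply, avgMat, Matrix.of_apply]
      rw [havg i]
    rw [hL, hR, hc, one_mul]
  have hentry2 : ∀ i j, (M - M * avgMat N) i j = x i j := by
    intro i j
    simp only [Matrix.sub_apply, Matrix.mul_apply, avgMat, Matrix.of_apply, hxdef]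
    rw [havg i]
  unfold frobSq
  calc ∑ i, ∑ j, (M * W - M * avgMat N) i j ^ 2
      = ∑ i, ∑ j, (W.transpose *ᵥ x i) j ^ 2 :=
        Finset.sum_congr rfl fun i _ => Finset.sum_congr rfl fun j _ => by rw [hentry1]
    _ ≤ ∑ i, lam2 * ∑ j, x i j ^ 2 :=
        Finset.sum_le_sum fun i _ => row_contract W hDS hA lam2 hlam2 (x i) (hx0 i)
    _ = lam2 * ∑ i, ∑ j, x i j ^ 2 := (Finset.mul_sum _ _ _).symm
    _ = lam2 * ∑ i, ∑ j, (M - M * avgMat N) i j ^ 2 := by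
        congr 1
        exact Finset.sum_congr rfl fun i _ => Finset.sum_congr rfl fun j _ => by
          rw [hentry2]
end
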